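/- Let p be a prime and let c ∈ K satisfy v(c) < 0 and p·v(p) + (p−1)·v(c) > 0. Suppose γ, γ' ∈ K satisfy γ^p − γ = c and (γ')^p − γ' = c. Then δ := γ − γ' satisfies v(δ) ≥ 0 and v(δ^p − δ) > 0; in other words, δ lies in the valuation ring of v and its residue is a root of X^p − X in the residue field, hence lies in the prime subfield 𝔽_p. (This is the paper's Lemma on differences of roots of the Artin–Schreier-type equation x^p − x = β^{p^e+1}, where K is an algebraic closure of a p-adic field and c = β^{p^e+1} has small negative valuation.) -/

import Mathlib

section Aux
variable {K : Type*} [Field K] (v : K → WithTop ℝ)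
  (h0 : ∀ x : K, v x = ⊤ ↔ x = 0)
  (hmul : ∀ x y : K, v (x * y) = v x + v y)
  (hadd : ∀ x y : K, min (v x) (v y) ≤ v (x + y))

include h0 hmul in
theorem as_aux_v_one : v 1 = 0 := by
  have h := hmul 1 1
  rw [one_mul] at h
  have h1 : v 1 ≠ ⊤ := by simp [h0]
  lift v 1 to ℝ using h1 with r hr
  have : r = r + r := by exact_mod_cast h
  have : r = 0 := by linarith
  exact_mod_cast congrArg (fun x : ℝ => (x : WithTop ℝ)) this

include h0 hmul in
theorem as_aux_v_neg (x : K) : v (-x) = v x := by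
  have hm1 : v (-1 : K) = 0 := by
    have h := hmul (-1 : K) (-1)
    rw [neg_mul_neg, one_mul, as_aux_v_one v h0 hmul] at h
    have h1 : v (-1 : K) ≠ ⊤ := by simp [h0]
    lift v (-1 : K) to ℝ using h1 with r hr
    have : (0 : ℝ) = r + r := by exact_mod_cast h
    have : r = 0 := by linarith
    exact_mod_cast congrArg (fun x : ℝ => (x : WithTop ℝ)) this
  have := hmul (-1 : K) x
  rw [neg_one_mul, hm1, zero_add] at this
  exact this

include h0 hmul in
theorem as_aux_v_pow (x : K) (n : ℕ) : v (x ^ n) = n • v x := by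
  induction n with
  | zero => simpa using as_aux_v_one v h0 hmul
  | succ n ih =>
    rw [pow_succ, hmul, ih, succ_nsmul]

include h0 hmul hadd in
theorem as_aux_v_nat (n : ℕ) : 0 ≤ v (n : K) := by
  induction n with
  | zero => simp [(h0 0).2 rfl]
  | succ n ih =>
    have := hadd (n : K) 1
    push_cast
    refine le_trans ?_ (hadd (n : K) 1)
    rw [as_aux_v_one v h0 hmul]
    exact le_min ih le_rfl

include h0 hmul hadd in
theorem as_aux_v_strict (x y : K) (h : v x < v y) : v (x + y) = v x := by
  refine le_antisymm ?_ (le_trans (le_min le_rfl h.le) (hadd x y))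
  have h2 := hadd (x + y) (-y)
  rw [add_neg_cancel_right, as_aux_v_neg v h0 hmul] at h2
  rcases le_total (v (x + y)) (v y) with h3 | h3
  · rwa [min_eq_left h3] at h2
  · rw [min_eq_right h3] at h2
    exact absurd (lt_of_lt_of_le h h2) (lt_irrefl _)

include h0 hadd in
theorem as_aux_v_sum {ι : Type*} (s : Finset ι) (f : ι → K) (t : WithTop ℝ)
    (ht : t ≠ ⊤) (h : ∀ i ∈ s, t < v (f i)) : t < v (∑ i ∈ s, f i) := by
  induction s using Finset.cons_induction with
  | empty => simp [(h0 0).2 rfl]; exact lt_top_iff_ne_top.2 ht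
  | cons a s ha ih =>
    rw [Finset.sum_cons]
    refine lt_of_lt_of_le ?_ (hadd _ _)
    exact lt_min (h a (Finset.mem_cons_self a s)) (ih fun i hi => h i (Finset.mem_cons_of_mem hi))

end Aux

/-- **Differences of roots of the Artin–Schreier-type equation `x^p − x = c`.**
Let `K` be a field with an additive valuation `v : K → ℝ ∪ {+∞}`, let `p` be a prime and
`c ∈ K` with `v(c) < 0` and `p·v(p) + (p−1)·v(c) > 0`. If `γ^p − γ = c` and `γ'^p − γ' = c`,
then `δ := γ − γ'` satisfies `v(δ) ≥ 0` and `v(δ^p − δ) > 0`; i.e. `δ` lies in the valuation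
ring and its residue is a root of `X^p − X`, hence lies in the prime subfield `𝔽_p`. -/
theorem artin_schreier_root_difference {K : Type*} [Field K]
    (v : K → WithTop ℝ)
    (h0 : ∀ x : K, v x = ⊤ ↔ x = 0)
    (hmul : ∀ x y : K, v (x * y) = v x + v y)
    (hadd : ∀ x y : K, min (v x) (v y) ≤ v (x + y))
    (p : ℕ) (hp : p.Prime)
    (c : K) (hc : v c < 0)
    (hpc : 0 < p • v ((p : K)) + (p - 1) • v c)
    (γ γ' : K) (hγ : γ ^ p - γ = c) (hγ' : γ' ^ p - γ' = c) :
    0 ≤ v (γ - γ') ∧ 0 < v ((γ - γ') ^ p - (γ - γ')) := by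
  have vneg := as_aux_v_neg v h0 hmul
  have vpow := as_aux_v_pow v h0 hmul
  have vnat := as_aux_v_nat v h0 hmul hadd
  have vstrict := as_aux_v_strict v h0 hmul hadd
  have hcoe : ∀ (n : ℕ) (r : ℝ), n • ((r : ℝ) : WithTop ℝ) = (((n : ℝ) * r : ℝ) : WithTop ℝ) := by
    intro n r; rw [← nsmul_eq_mul]; rfl
  have hsub : ∀ x y : K, min (v x) (v y) ≤ v (x - y) := by
    intro x y
    have h := hadd x (-y)
    rw [vneg] at h
    rw [sub_eq_add_neg]
    exact h
  -- γ' has negative valuation and p • v γ' = v c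
  have hγ'neg : v γ' < 0 := by
    by_contra hge
    push_neg at hge
    have h1 : (0 : WithTop ℝ) ≤ v (γ' ^ p) := by
      rw [vpow]; exact nsmul_nonneg hge p
    have h2 : (0 : WithTop ℝ) ≤ v (γ' ^ p - γ') := le_trans (le_min h1 hge) (hsub _ _)
    rw [hγ'] at h2
    exact absurd (lt_of_le_of_lt h2 hc) (lt_irrefl _)
  lift v γ' to ℝ using hγ'neg.ne_top with g hg
  have hgneg : g < 0 := by exact_mod_cast hγ'neg
  have hp1 : (1 : ℝ) ≤ (p : ℝ) := by exact_mod_cast hp.one_le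
  have hp2 : (2 : ℝ) ≤ (p : ℝ) := by exact_mod_cast hp.two_le
  have hvc : v c = (((p : ℝ) * g : ℝ) : WithTop ℝ) := by
    have h1 : v (γ' ^ p) = (((p : ℝ) * g : ℝ) : WithTop ℝ) := by
      rw [vpow, ← hg, hcoe]
    have h2 : v (γ' ^ p) < v (-γ') := by
      rw [vneg, ← hg, h1]
      exact_mod_cast (by nlinarith : (p : ℝ) * g < g)
    have h3 := vstrict _ _ h2
    rw [← sub_eq_add_neg, hγ'] at h3
    rw [h3, h1]
  -- the real form of the main hypothesis
  have hpcr : ∀ w : ℝ, v ((p : K)) = (w : ℝ) →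
      (0 : ℝ) < (p : ℝ) * w + ((p : ℝ) - 1) * ((p : ℝ) * g) := by
    intro w hw
    have h := hpc
    rw [hvc, hw, hcoe, hcoe] at h
    have h2 : (0 : ℝ) < (p : ℝ) * w + ((p - 1 : ℕ) : ℝ) * ((p : ℝ) * g) := by
      exact_mod_cast h
    rw [Nat.cast_sub hp.one_le] at h2
    push_cast at h2
    linarith
  -- binomial expansion
  obtain ⟨δ, hδ⟩ : ∃ d : K, d = γ - γ' := ⟨γ - γ', rfl⟩
  rw [← hδ]
  obtain ⟨S, hSdef⟩ : ∃ s : K,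
      s = ∑ k ∈ (Finset.range p).erase 0, γ' ^ k * δ ^ (p - k) * (p.choose k : K) := ⟨_, rfl⟩
  have hsplit : (γ' + δ) ^ p = γ' ^ p + δ ^ p + S := by
    have hins : Finset.range p = insert 0 ((Finset.range p).erase 0) :=
      (Finset.insert_erase (Finset.mem_range.mpr hp.pos)).symm
    have hrp : ∑ k ∈ Finset.range p, γ' ^ k * δ ^ (p - k) * (p.choose k : K)
        = γ' ^ 0 * δ ^ (p - 0) * (p.choose 0 : K) + S := by
      rw [hins, Finset.sum_insert (Finset.notMem_erase _ _), hSdef]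
    rw [add_pow, Finset.sum_range_succ, hrp]
    simp only [pow_zero, one_mul, Nat.sub_zero, Nat.choose_zero_right, Nat.cast_one, mul_one,
      Nat.sub_self, Nat.choose_self]
    ring
  have hkey : δ ^ p + S = δ := by
    rw [hδ] at hsplit ⊢
    linear_combination hγ - hγ' - hsplit
  -- valuation of each cross term
  have hterm : ∀ k ∈ (Finset.range p).erase 0,
      (((k : ℝ) * g : ℝ) : WithTop ℝ) + (p - k) • v δ + v ((p.choose k : K)) ≤
        v (γ' ^ k * δ ^ (p - k) * (p.choose k : K)) := by
    intro k hk
    rw [hmul, hmul, vpow, vpow, ← hg, hcoe]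
  have hchoose : ∀ k ∈ (Finset.range p).erase 0, v ((p : K)) ≤ v ((p.choose k : K)) := by
    intro k hk
    obtain ⟨hk0, hkp⟩ := Finset.mem_erase.mp hk
    obtain ⟨m, hm⟩ := hp.dvd_choose_self hk0 (Finset.mem_range.mp hkp)
    have : ((p.choose k : ℕ) : K) = (p : K) * (m : K) := by rw [hm]; push_cast; ring
    rw [this, hmul]
    calc v ((p : K)) = v ((p : K)) + 0 := (add_zero _).symm
      _ ≤ v ((p : K)) + v ((m : K)) := add_le_add le_rfl (vnat m)
  rcases le_or_gt 0 (v δ) with hd | hd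
  · refine ⟨hd, ?_⟩
    have hds : δ ^ p - δ = -S := by linear_combination hkey
    rw [hds, vneg, hSdef]
    refine as_aux_v_sum v h0 hadd _ _ 0 (by simp) ?_
    intro k hk
    obtain ⟨hk0, hkp⟩ := Finset.mem_erase.mp hk
    have hkp' := Finset.mem_range.mp hkp
    refine lt_of_lt_of_le ?_ (hterm k hk)
    have h1 : (0 : WithTop ℝ) ≤ (p - k) • v δ := nsmul_nonneg hd _
    have h2 : (0 : WithTop ℝ) < (((k : ℝ) * g : ℝ) : WithTop ℝ) + v ((p.choose k : K)) := by
      rcases eq_or_ne (v ((p : K))) ⊤ with htop | htop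
      · have h3 : v ((p.choose k : K)) = ⊤ := top_le_iff.mp (htop ▸ hchoose k hk)
        rw [h3, add_top]
        exact lt_top_iff_ne_top.mpr (by simp)
      · refine lt_of_lt_of_le ?_ (add_le_add le_rfl (hchoose k hk))
        lift v ((p : K)) to ℝ using htop with w hw
        have hw0 : (0 : ℝ) ≤ w := by exact_mod_cast (hw ▸ vnat p)
        have hpcr' := hpcr w rfl
        have hk1 : (1 : ℝ) ≤ (k : ℝ) := by exact_mod_cast Nat.one_le_iff_ne_zero.mpr hk0
        have hkle : (k : ℝ) ≤ (p : ℝ) - 1 := by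
          have h4 : k + 1 ≤ p := hkp'
          have h5 := (Nat.cast_le (α := ℝ)).mpr h4
          push_cast at h5; linarith
        have h6 : (0 : ℝ) < (k : ℝ) * g + w := by
          nlinarith [mul_nonneg (sub_nonneg.mpr hkle) (neg_nonneg.mpr hgneg.le)]
        exact_mod_cast h6
    calc (0 : WithTop ℝ) < (((k : ℝ) * g : ℝ) : WithTop ℝ) + v ((p.choose k : K)) := h2
      _ = (((k : ℝ) * g : ℝ) : WithTop ℝ) + 0 + v ((p.choose k : K)) := by rw [add_zero]
      _ ≤ (((k : ℝ) * g : ℝ) : WithTop ℝ) + (p - k) • v δ + v ((p.choose k : K)) := by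
          exact add_le_add (add_le_add le_rfl h1) le_rfl
  · exfalso
    lift v δ to ℝ using hd.ne_top with d hdd
    have hdneg : d < 0 := by exact_mod_cast hd
    have h1 : v (δ ^ p) = (((p : ℝ) * d : ℝ) : WithTop ℝ) := by
      rw [vpow, ← hdd, hcoe]
    have h2 : δ ^ p = δ - S := by linear_combination hkey
    have hub : (((p : ℝ) * d : ℝ) : WithTop ℝ) < v (δ - S) := by
      refine lt_of_lt_of_le (lt_min ?_ ?_) (hsub δ S)
      · rw [← hdd]; exact_mod_cast (by nlinarith : (p : ℝ) * d < d)
      · rw [hSdef]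
        refine as_aux_v_sum v h0 hadd _ _ _ WithTop.coe_ne_top ?_
        intro k hk
        obtain ⟨hk0, hkp⟩ := Finset.mem_erase.mp hk
        have hkp' := Finset.mem_range.mp hkp
        refine lt_of_lt_of_le ?_ (hterm k hk)
        have hsm : (p - k) • ((d : ℝ) : WithTop ℝ) = ((((p : ℝ) - (k : ℝ)) * d : ℝ) : WithTop ℝ) := by
          rw [hcoe, Nat.cast_sub hkp'.le]
        rw [hsm]
        refine lt_of_lt_of_le ?_ (add_le_add le_rfl (hchoose k hk))
        rcases eq_or_ne (v ((p : K))) ⊤ with htop | htop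
        · rw [htop, add_top]
          exact WithTop.coe_lt_top _
        · lift v ((p : K)) to ℝ using htop with w hw
          have hw0 : (0 : ℝ) ≤ w := by exact_mod_cast (hw ▸ vnat p)
          have hpcr' := hpcr w rfl
          have hk1 : (1 : ℝ) ≤ (k : ℝ) := by exact_mod_cast Nat.one_le_iff_ne_zero.mpr hk0
          have hkle : (k : ℝ) ≤ (p : ℝ) - 1 := by
            have h4 : k + 1 ≤ p := hkp'
            have h5 := (Nat.cast_le (α := ℝ)).mpr h4
            push_cast at h5; linarith
          have h6 : (p : ℝ) * d < (k : ℝ) * g + ((p : ℝ) - (k : ℝ)) * d + w := by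
            nlinarith [mul_nonneg (sub_nonneg.mpr hkle) (neg_nonneg.mpr hgneg.le),
              mul_pos (lt_of_lt_of_le zero_lt_one hk1) (neg_pos.mpr hdneg)]
          exact_mod_cast h6
    rw [← h2, h1] at hub
    exact lt_irrefl _ hub
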